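/- Consider the linear ODE ẋ = J x on ℝⁿ where J = −D⁻¹M with D = bdiag(C_P, C_V, L_T) positive definite diagonal and M = [[G_P + G_P⋆, 0, B_P],[0, G_V + G_V⋆, B_V],[−B_Pᵀ, −B_Vᵀ, R_T]]. If G_P + G_P⋆ and G_V + G_V⋆ and R_T are diagonal with positive entries, then all eigenvalues of J have negative real part, and hence the origin is asymptotically stable. -/

import Mathlib

open Matrix Filter

section Aux

section Aux

variable {n : Type*} [Fintype n] [DecidableEq n]

lemma aux_conj_quad (A : Matrix n n ℝ) (z : n → ℂ) :
    (starRingEnd ℂ) (star z ⬝ᵥ (A.map (algebraMap ℝ ℂ)) *ᵥ z) =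
      star z ⬝ᵥ ((Aᵀ.map (algebraMap ℝ ℂ)) *ᵥ z) := by
  set B := A.map (algebraMap ℝ ℂ) with hB
  have hBH : Bᴴ = Bᵀ := by
    ext i j
    simp [hB, conjTranspose_apply, Complex.conj_ofReal]
  have h1 : star z ⬝ᵥ B *ᵥ z = star (star (B *ᵥ z) ⬝ᵥ z) := Matrix.star_dotProduct _ _
  have hT : Aᵀ.map (algebraMap ℝ ℂ) = Bᵀ := by
    ext i j; simp [hB]
  rw [h1, hT]
  show star (star (star (B *ᵥ z) ⬝ᵥ z)) = _
  rw [star_star, Matrix.star_mulVec, hBH, Matrix.dotProduct_mulVec, Matrix.vecMul_transpose]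

lemma aux_diag_quad (d : n → ℝ) (z : n → ℂ) :
    star z ⬝ᵥ ((diagonal d).map (algebraMap ℝ ℂ)) *ᵥ z =
      ((∑ i, d i * Complex.normSq (z i) : ℝ) : ℂ) := by
  have hd : (diagonal d).map (algebraMap ℝ ℂ) = diagonal (fun i => (d i : ℂ)) := by
    rw [Matrix.diagonal_map (map_zero _)]; rfl
  have key : ∀ w : ℂ, star w * w = (Complex.normSq w : ℂ) :=
    fun w => (Complex.normSq_eq_conj_mul_self).symm
  rw [hd]
  push_cast
  simp only [dotProduct, Matrix.mulVec_diagonal, Pi.star_apply]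
  refine Finset.sum_congr rfl fun i _ => ?_
  rw [show star (z i) * ((d i : ℂ) * z i) = (d i : ℂ) * (star (z i) * z i) from by ring, key]

end Aux

set_option maxHeartbeats 1600000 in
/-- If all linearized conductances are positive, the linearized hvdc model ẋ = Jx with
J = -D⁻¹M is Hurwitz and the origin is asymptotically stable. -/
theorem hurwitz_of_positive_conductances {p v t : ℕ}
    (BP : Matrix (Fin p) (Fin t) ℝ) (BV : Matrix (Fin v) (Fin t) ℝ)
    (dD : (Fin p ⊕ Fin v) ⊕ Fin t → ℝ) (hdD : ∀ i, 0 < dD i)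
    (gP : Fin p → ℝ) (hgP : ∀ j, 0 < gP j)
    (gV : Fin v → ℝ) (hgV : ∀ k, 0 < gV k)
    (rT : Fin t → ℝ) (hrT : ∀ i, 0 < rT i)
    (M : Matrix ((Fin p ⊕ Fin v) ⊕ Fin t) ((Fin p ⊕ Fin v) ⊕ Fin t) ℝ)
    (hM : M = Matrix.fromBlocks
        (Matrix.fromBlocks (Matrix.diagonal gP) 0 0 (Matrix.diagonal gV))
        (Matrix.of (Sum.elim (fun a j => BP a j) (fun b j => BV b j)))
        (-(Matrix.of (Sum.elim (fun a j => BP a j) (fun b j => BV b j))).transpose)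
        (Matrix.diagonal rT))
    (J : Matrix ((Fin p ⊕ Fin v) ⊕ Fin t) ((Fin p ⊕ Fin v) ⊕ Fin t) ℝ)
    (hJ : J = -((Matrix.diagonal dD)⁻¹ * M)) :
    (∀ μ : ℂ, μ ∈ spectrum ℂ (J.map (algebraMap ℝ ℂ)) → μ.re < 0) ∧
    ∀ x0 : (Fin p ⊕ Fin v) ⊕ Fin t → ℝ,
      Tendsto (fun s : ℝ => (NormedSpace.exp (s • J)).mulVec x0) atTop (nhds 0) := by
  rcases isEmpty_or_nonempty ((Fin p ⊕ Fin v) ⊕ Fin t) with hE | hE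
  · constructor
    · intro μ hμ
      rw [spectrum.mem_iff] at hμ
      exact absurd (isUnit_of_subsingleton _) hμ
    · intro x0
      exact tendsto_const_nhds.congr fun s =>
        (Subsingleton.elim (0 : (Fin p ⊕ Fin v) ⊕ Fin t → ℝ) _)
  · have hE' := hE
    set c : (Fin p ⊕ Fin v) ⊕ Fin t → ℝ := Sum.elim (Sum.elim gP gV) rT with hc_def
    have hc : ∀ i, 0 < c i := by
      rintro ((j|k)|i) <;> simp [hc_def] <;> [exact hgP j; exact hgV k; exact hrT i]
    have hMM : M + Mᵀ = diagonal (fun i => 2 * c i) := by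
      rw [hM]
      ext (⟨a|a⟩|a) (⟨b|b⟩|b) <;>
        simp [Matrix.diagonal_apply, hc_def] <;>
        (try (split_ifs with h1 h2 <;> simp_all <;> ring))
    have hDJ : diagonal dD * J = -M := by
      rw [hJ, Matrix.mul_neg, ← Matrix.mul_assoc,
        Matrix.mul_nonsing_inv _ (by
          rw [Matrix.det_diagonal]
          exact isUnit_iff_ne_zero.mpr (Finset.prod_pos fun i _ => hdD i).ne'), Matrix.one_mul]
    constructor
    · intro μ hμ
      set A := J.map (algebraMap ℝ ℂ) with hA
      -- eigenvector
      obtain ⟨z, hz, hzeq⟩ : ∃ z : ((Fin p ⊕ Fin v) ⊕ Fin t) → ℂ, z ≠ 0 ∧ A *ᵥ z = μ • z := by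
        rw [spectrum.mem_iff, Matrix.isUnit_iff_isUnit_det] at hμ
        have hdet : ((algebraMap ℂ (Matrix ((Fin p ⊕ Fin v) ⊕ Fin t) ((Fin p ⊕ Fin v) ⊕ Fin t) ℂ)) μ - A).det = 0 := by
          by_contra h; exact hμ (isUnit_iff_ne_zero.mpr h)
        obtain ⟨z, hz, hz2⟩ := (Matrix.exists_mulVec_eq_zero_iff).mpr hdet
        refine ⟨z, hz, ?_⟩
        have h0 : (algebraMap ℂ (Matrix ((Fin p ⊕ Fin v) ⊕ Fin t) ((Fin p ⊕ Fin v) ⊕ Fin t) ℂ)) μ *ᵥ z - A *ᵥ z = 0 := by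
          rw [← Matrix.sub_mulVec, hz2]
        rw [Algebra.algebraMap_eq_smul_one, Matrix.smul_mulVec, Matrix.one_mulVec] at h0
        exact (sub_eq_zero.mp h0).symm
      -- complexified identity : M_ℂ *ᵥ z = -(μ • (D_ℂ *ᵥ z))
      set Mc := M.map (algebraMap ℝ ℂ) with hMc
      set Dc := (diagonal dD).map (algebraMap ℝ ℂ) with hDc
      have hDJc : Dc * A = -Mc := by
        rw [hDc, hA, hMc, ← Matrix.map_mul, hDJ]
        ext i j
        simp
      have hMz : Mc *ᵥ z = -(μ • (Dc *ᵥ z)) := by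
        have : (Dc * A) *ᵥ z = Dc *ᵥ (A *ᵥ z) := (Matrix.mulVec_mulVec _ _ _).symm
        rw [hDJc] at this
        rw [hzeq, Matrix.mulVec_smul] at this
        have := this.symm
        rw [Matrix.neg_mulVec] at this
        -- this : μ • (Dc *ᵥ z) = -(Mc *ᵥ z)
        rw [eq_comm, neg_eq_iff_eq_neg] at this
        exact this
      -- quadratic forms
      set dsum := ∑ i, dD i * Complex.normSq (z i) with hdsum
      set csum := ∑ i, (2 * c i) * Complex.normSq (z i) with hcsum
      have hzsome : ∃ i, z i ≠ 0 := by
        by_contra h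
        push_neg at h
        exact hz (funext h)
      obtain ⟨i0, hi0⟩ := hzsome
      have hdpos : 0 < dsum :=
        Finset.sum_pos' (fun i _ => mul_nonneg (hdD i).le (Complex.normSq_nonneg _))
          ⟨i0, Finset.mem_univ _, mul_pos (hdD i0) (Complex.normSq_pos.mpr hi0)⟩
      have hcpos : 0 < csum :=
        Finset.sum_pos' (fun i _ => mul_nonneg (by linarith [hc i]) (Complex.normSq_nonneg _))
          ⟨i0, Finset.mem_univ _, mul_pos (by linarith [hc i0]) (Complex.normSq_pos.mpr hi0)⟩
      set S := star z ⬝ᵥ Mc *ᵥ z with hS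
      have hS1 : S = -(μ * (dsum : ℂ)) := by
        rw [hS, hMz, dotProduct_neg, dotProduct_smul, aux_diag_quad dD z, ← hdsum]
        rw [smul_eq_mul]
      have hS2 : S + (starRingEnd ℂ) S = (csum : ℂ) := by
        rw [hS]
        rw [aux_conj_quad M z]
        rw [← dotProduct_add, ← Matrix.add_mulVec, ← Matrix.map_add _ (fun a b => map_add (algebraMap ℝ ℂ) a b), hMM,
          aux_diag_quad (fun i => 2 * c i) z, hcsum]
      have hre : 2 * S.re = csum := by
        have := congrArg Complex.re hS2
        rwa [Complex.add_conj, Complex.ofReal_re] at this  -- careful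
      have hSre : S.re = -(μ.re * dsum) := by
        rw [hS1]
        simp [Complex.mul_re]
      nlinarith [hre, hSre, hdpos, hcpos]
    · intro x0
      letI : SeminormedRing (Matrix ((Fin p ⊕ Fin v) ⊕ Fin t) ((Fin p ⊕ Fin v) ⊕ Fin t) ℝ) := Matrix.linftyOpSemiNormedRing
      letI : NormedRing (Matrix ((Fin p ⊕ Fin v) ⊕ Fin t) ((Fin p ⊕ Fin v) ⊕ Fin t) ℝ) := Matrix.linftyOpNormedRing
      letI : NormedAlgebra ℝ (Matrix ((Fin p ⊕ Fin v) ⊕ Fin t) ((Fin p ⊕ Fin v) ⊕ Fin t) ℝ) := Matrix.linftyOpNormedAlgebra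
      set f : ℝ → ((Fin p ⊕ Fin v) ⊕ Fin t) → ℝ := fun s => (NormedSpace.exp (s • J)).mulVec x0 with hf
      -- the linear map A ↦ A.mulVec x0 as a CLM
      let L : Matrix ((Fin p ⊕ Fin v) ⊕ Fin t) ((Fin p ⊕ Fin v) ⊕ Fin t) ℝ →L[ℝ] (((Fin p ⊕ Fin v) ⊕ Fin t) → ℝ) :=
        LinearMap.toContinuousLinearMap
          { toFun := fun A => A.mulVec x0
            map_add' := fun A B => Matrix.add_mulVec A B x0
            map_smul' := fun r A => Matrix.smul_mulVec r A x0 }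
      have hf' : ∀ s, HasDerivAt f (J.mulVec (f s)) s := by
        intro s
        have h1 := hasDerivAt_exp_smul_const' (𝕂 := ℝ) J s
        have h2 := (L.hasFDerivAt.comp_hasDerivAt s h1)
        have h3 : L (J * NormedSpace.exp (s • J)) = J.mulVec (f s) := by
          show (J * NormedSpace.exp (s • J)).mulVec x0 = _
          rw [← Matrix.mulVec_mulVec]
        replace h2 := h2.congr_deriv h3
        exact h2
      have hfc : ∀ s i, HasDerivAt (fun u => f u i) ((J.mulVec (f s)) i) s :=
        fun s i => hasDerivAt_pi.mp (hf' s) i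
      -- quadratic identity
      have hquad : ∀ w : ((Fin p ⊕ Fin v) ⊕ Fin t) → ℝ,
          ∑ i, dD i * (2 * w i * (J.mulVec w) i) = -(∑ i, 2 * c i * (w i)^2) := by
        intro w
        have h1 : ∑ i, dD i * (2 * w i * (J.mulVec w) i)
            = 2 * (w ⬝ᵥ ((diagonal dD * J) *ᵥ w)) := by
          rw [← Matrix.mulVec_mulVec]
          simp only [dotProduct, Matrix.mulVec_diagonal]
          rw [Finset.mul_sum]
          exact Finset.sum_congr rfl fun i _ => by ring
        have h2 : w ⬝ᵥ (Mᵀ *ᵥ w) = w ⬝ᵥ (M *ᵥ w) := by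
          rw [Matrix.dotProduct_mulVec w Mᵀ, Matrix.vecMul_transpose, dotProduct_comm]
        have h3 : w ⬝ᵥ ((M + Mᵀ) *ᵥ w) = ∑ i, 2 * c i * (w i)^2 := by
          rw [hMM]
          simp only [dotProduct, Matrix.mulVec_diagonal]
          exact Finset.sum_congr rfl fun i _ => by ring
        rw [h1, hDJ, Matrix.neg_mulVec, dotProduct_neg]
        rw [Matrix.add_mulVec, dotProduct_add, h2] at h3
        linarith
      set V : ℝ → ℝ := fun s => ∑ i, dD i * (f s i)^2 with hV
      have hV' : ∀ s, HasDerivAt V (-(∑ i, 2 * c i * (f s i)^2)) s := by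
        intro s
        rw [← hquad (f s)]
        refine HasDerivAt.fun_sum fun i _ => ?_
        have := ((hfc s i).pow 2).const_mul (dD i)
        convert this using 1
        · rfl
        · rfl
        ring_nf
      -- the decay rate
      set k : ℝ := 2 * Finset.univ.inf' Finset.univ_nonempty (fun i => c i / dD i) with hk_def
      have hk : 0 < k := by
        rw [hk_def]
        have h0 : ∀ i, 0 < c i / dD i := fun i => div_pos (hc i) (hdD i)
        obtain ⟨i1, -, h1⟩ := Finset.exists_mem_eq_inf' Finset.univ_nonempty (fun i => c i / dD i)
        rw [h1]
        exact mul_pos two_pos (h0 i1)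
      have hVpos : ∀ s, 0 ≤ V s := fun s =>
        Finset.sum_nonneg fun i _ => mul_nonneg (hdD i).le (sq_nonneg _)
      have hkey : ∀ s, k * V s ≤ ∑ i, 2 * c i * (f s i)^2 := by
        intro s
        rw [hV, Finset.mul_sum]
        refine Finset.sum_le_sum fun i _ => ?_
        have h1 : k ≤ 2 * (c i / dD i) := by
          rw [hk_def]
          have := Finset.inf'_le (f := fun i => c i / dD i) (b := i)
            (Finset.mem_univ i)
          linarith
        have h2 : k * dD i ≤ 2 * c i := by
          have h3 := mul_le_mul_of_nonneg_right h1 (hdD i).le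
          have h4 : 2 * (c i / dD i) * dD i = 2 * c i := by
            field_simp
            rw [mul_div_assoc, div_self (hdD i).ne', mul_one]
          linarith
        calc k * (dD i * f s i ^ 2) = (k * dD i) * f s i ^ 2 := by ring
          _ ≤ (2 * c i) * f s i ^ 2 := mul_le_mul_of_nonneg_right h2 (sq_nonneg _)
      -- W = V * exp(k s) is antitone
      set W : ℝ → ℝ := fun s => V s * Real.exp (k * s) with hW
      have hW' : ∀ s, HasDerivAt W
          ((-(∑ i, 2 * c i * (f s i)^2)) * Real.exp (k * s) + V s * (Real.exp (k * s) * k)) s := by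
        intro s
        exact (hV' s).mul ((Real.hasDerivAt_exp (k * s)).comp s
          ((hasDerivAt_id s).const_mul k) |>.congr_deriv (by ring))
      have hWanti : Antitone W := by
        refine antitone_of_deriv_nonpos (fun s => (hW' s).differentiableAt) ?_
        intro s
        rw [(hW' s).deriv]
        have h1 := hkey s
        have h2 := Real.exp_pos (k * s)
        nlinarith
      -- V s ≤ V 0 * exp (-(k*s)) for s ≥ 0
      have hVbound : ∀ s : ℝ, 0 ≤ s → V s ≤ V 0 * Real.exp (-(k * s)) := by
        intro s hs
        have h1 : W s ≤ W 0 := hWanti hs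
        rw [hW] at h1
        simp only at h1
        rw [mul_zero, Real.exp_zero, mul_one] at h1
        have h2 := Real.exp_pos (k * s)
        rw [Real.exp_neg, ← div_eq_mul_inv, le_div_iff₀ h2]
        exact h1
      have hVlim : Tendsto V atTop (nhds 0) := by
        have hub : Tendsto (fun s => V 0 * Real.exp (-(k * s))) atTop (nhds 0) := by
          have h1 : Tendsto (fun s : ℝ => k * s) atTop atTop :=
            Tendsto.const_mul_atTop hk tendsto_id
          have h2 : Tendsto (fun s : ℝ => -(k * s)) atTop atBot :=
            tendsto_neg_atTop_atBot.comp h1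
          have h3 := Real.tendsto_exp_atBot.comp h2
          simpa using h3.const_mul (V 0)
        refine squeeze_zero' (Eventually.of_forall hVpos)
          (eventually_atTop.mpr ⟨0, fun s hs => hVbound s hs⟩) hub
      -- conclude coordinatewise
      rw [show (0 : ((Fin p ⊕ Fin v) ⊕ Fin t) → ℝ) = (fun _ => 0 : ((Fin p ⊕ Fin v) ⊕ Fin t) → ℝ) from rfl]
      rw [tendsto_pi_nhds]
      intro i
      have hsq : Tendsto (fun s => (f s i)^2) atTop (nhds 0) := by
        have hub : Tendsto (fun s => (dD i)⁻¹ * V s) atTop (nhds 0) := by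
          have h := hVlim.const_mul (dD i)⁻¹
          rwa [mul_zero] at h
        refine squeeze_zero (fun s => sq_nonneg _) (fun s => ?_) hub
        have h1 : dD i * (f s i)^2 ≤ V s := by
          rw [hV]
          exact Finset.single_le_sum (f := fun j => dD j * (f s j)^2)
            (fun j _ => mul_nonneg (hdD j).le (sq_nonneg _)) (Finset.mem_univ i)
        rw [inv_mul_eq_div, le_div_iff₀ (hdD i)]
        linarith
      have habs : Tendsto (fun s => |f s i|) atTop (nhds 0) := by
        have h1 := (Real.continuous_sqrt.tendsto 0).comp hsq
        simp only [Function.comp_def, Real.sqrt_sq_eq_abs, Real.sqrt_zero] at h1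
        exact h1
      exact tendsto_of_tendsto_of_tendsto_of_le_of_le (by simpa using habs.neg) habs
        (fun s => neg_abs_le _) (fun s => le_abs_self _)
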